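/- Let δ > 0, β₀ > 0, τ > 0 and β₁ ≥ 0 with β₀β₁ < δ. Then the function λ ↦ Δ(λ,τ) = λ + δ + β₀β₁ − (2β₀β₁/τ)∫_{−τ}^{0} e^{λs} ds, restricted to real λ, is strictly increasing, tends to −∞ as λ → −∞ and to +∞ as λ → +∞, and hence has a unique real zero λ₀; moreover Δ(0,τ) = δ − β₀β₁ > 0, so λ₀ < 0. -/

import Mathlib

/-- The characteristic function `Δ(λ, τ)` restricted to real `λ`:
`Δ(λ,τ) = λ + δ + β₀β₁ − (2β₀β₁/τ)∫_{−τ}^{0} e^{λ s} ds`. -/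
noncomputable def charFnR (δ β₀ β₁ τ lam : ℝ) : ℝ :=
  lam + δ + β₀ * β₁ - (2 * β₀ * β₁ / τ) * ∫ s in (-τ)..(0 : ℝ), Real.exp (lam * s)

lemma gInt_antitone (τ : ℝ) (hτ : 0 < τ) :
    Antitone (fun lam : ℝ => ∫ s in (-τ)..(0 : ℝ), Real.exp (lam * s)) := by
  intro a b hab
  apply intervalIntegral.integral_mono_on (by linarith : (-τ : ℝ) ≤ 0)
  · exact (Real.continuous_exp.comp (continuous_const.mul continuous_id)).intervalIntegrable _ _
  · exact (Real.continuous_exp.comp (continuous_const.mul continuous_id)).intervalIntegrable _ _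
  · intro s hs
    have hs0 : s ≤ 0 := hs.2
    exact Real.exp_le_exp.mpr (mul_le_mul_of_nonpos_right hab hs0)

lemma gInt_nonneg (τ lam : ℝ) (hτ : 0 < τ) :
    0 ≤ ∫ s in (-τ)..(0 : ℝ), Real.exp (lam * s) :=
  intervalIntegral.integral_nonneg (by linarith) (fun s _ => (Real.exp_pos _).le)

lemma gInt_zero (τ : ℝ) : (∫ s in (-τ)..(0 : ℝ), Real.exp ((0:ℝ) * s)) = τ := by
  simp

lemma gInt_continuous (τ : ℝ) :
    Continuous (fun lam : ℝ => ∫ s in (-τ)..(0 : ℝ), Real.exp (lam * s)) := by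
  apply intervalIntegral.continuous_parametric_intervalIntegral_of_continuous'
  exact Real.continuous_exp.comp (continuous_fst.mul continuous_snd)

/-- for `β₁ ≥ 0` with `β₀ β₁ < δ`, the real characteristic function is strictly
increasing, tends to `−∞` at `−∞` and `+∞` at `+∞`, has a unique real zero `λ₀`;
moreover `Δ(0,τ) = δ − β₀β₁ > 0` and `λ₀ < 0`. -/
theorem charFnR_strictMono_unique_negative_zero
    (δ β₀ β₁ τ : ℝ) (hδ : 0 < δ) (hβ₀ : 0 < β₀) (hτ : 0 < τ)
    (hβ₁ : 0 ≤ β₁) (hlt : β₀ * β₁ < δ) :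
    StrictMono (charFnR δ β₀ β₁ τ) ∧
    Filter.Tendsto (charFnR δ β₀ β₁ τ) Filter.atBot Filter.atBot ∧
    Filter.Tendsto (charFnR δ β₀ β₁ τ) Filter.atTop Filter.atTop ∧
    (∃! lam₀ : ℝ, charFnR δ β₀ β₁ τ lam₀ = 0) ∧
    charFnR δ β₀ β₁ τ 0 = δ - β₀ * β₁ ∧ 0 < charFnR δ β₀ β₁ τ 0 ∧
    (∀ lam₀ : ℝ, charFnR δ β₀ β₁ τ lam₀ = 0 → lam₀ < 0) := by
  have hc : 0 ≤ 2 * β₀ * β₁ / τ := by positivity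
  -- strict mono
  have hmono : StrictMono (charFnR δ β₀ β₁ τ) := by
    intro a b hab
    have hgab : (∫ s in (-τ)..(0 : ℝ), Real.exp (b * s)) ≤
        ∫ s in (-τ)..(0 : ℝ), Real.exp (a * s) := gInt_antitone τ hτ hab.le
    have h2 : (2 * β₀ * β₁ / τ) * ∫ s in (-τ)..(0 : ℝ), Real.exp (b * s) ≤
        (2 * β₀ * β₁ / τ) * ∫ s in (-τ)..(0 : ℝ), Real.exp (a * s) :=
      mul_le_mul_of_nonneg_left hgab hc
    unfold charFnR
    linarith
  -- value at 0
  have hval : charFnR δ β₀ β₁ τ 0 = δ - β₀ * β₁ := by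
    unfold charFnR
    rw [gInt_zero]
    field_simp
    ring
  have hpos0 : 0 < charFnR δ β₀ β₁ τ 0 := by rw [hval]; linarith
  -- atBot
  have hbot : Filter.Tendsto (charFnR δ β₀ β₁ τ) Filter.atBot Filter.atBot := by
    apply Filter.tendsto_atBot_mono
      (f := fun lam : ℝ => lam + (δ + β₀ * β₁))
    · intro lam
      have : 0 ≤ (2 * β₀ * β₁ / τ) * ∫ s in (-τ)..(0 : ℝ), Real.exp (lam * s) :=
        mul_nonneg hc (gInt_nonneg τ lam hτ)
      unfold charFnR
      linarith
    · exact Filter.tendsto_atBot_add_const_right _ (δ + β₀ * β₁) Filter.tendsto_id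
  -- atTop
  have htop : Filter.Tendsto (charFnR δ β₀ β₁ τ) Filter.atTop Filter.atTop := by
    apply Filter.tendsto_atTop_mono'
      (f₁ := fun lam : ℝ => lam + (δ - β₀ * β₁))
    · filter_upwards [Filter.eventually_ge_atTop (0 : ℝ)] with lam hlam
      have hgτ : (∫ s in (-τ)..(0 : ℝ), Real.exp (lam * s)) ≤ τ := by
        have := gInt_antitone τ hτ hlam
        simpa [gInt_zero τ] using this
      have h2 : (2 * β₀ * β₁ / τ) * ∫ s in (-τ)..(0 : ℝ), Real.exp (lam * s) ≤
          (2 * β₀ * β₁ / τ) * τ := mul_le_mul_of_nonneg_left hgτ hc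
      have hcτ : (2 * β₀ * β₁ / τ) * τ = 2 * (β₀ * β₁) := by field_simp
      unfold charFnR
      rw [hcτ] at h2
      linarith
    · exact Filter.tendsto_atTop_add_const_right _ (δ - β₀ * β₁) Filter.tendsto_id
  -- continuity
  have hcont : Continuous (charFnR δ β₀ β₁ τ) := by
    unfold charFnR
    exact ((continuous_id.add continuous_const).add continuous_const).sub
      (continuous_const.mul (gInt_continuous τ))
  -- existence of zero
  have hzero : ∃ lam₀ : ℝ, charFnR δ β₀ β₁ τ lam₀ = 0 := by
    obtain ⟨a, ha⟩ := (hbot.eventually (Filter.eventually_le_atBot (0:ℝ))).exists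
    obtain ⟨b, hb⟩ := (htop.eventually (Filter.eventually_ge_atTop (0:ℝ))).exists
    rcases le_total a b with hab | hab
    · obtain ⟨c, _, hc0⟩ := intermediate_value_Icc hab hcont.continuousOn
        (Set.mem_Icc.mpr ⟨ha, hb⟩)
      exact ⟨c, hc0⟩
    · obtain ⟨c, _, hc0⟩ := intermediate_value_Icc' hab hcont.continuousOn
        (Set.mem_Icc.mpr ⟨ha, hb⟩)
      exact ⟨c, hc0⟩
  obtain ⟨lam₀, hlam₀⟩ := hzero
  have hneg : ∀ l : ℝ, charFnR δ β₀ β₁ τ l = 0 → l < 0 := by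
    intro l hl
    have : charFnR δ β₀ β₁ τ l < charFnR δ β₀ β₁ τ 0 := by rw [hl]; exact hpos0
    exact hmono.lt_iff_lt.mp this
  exact ⟨hmono, hbot, htop, ⟨lam₀, hlam₀, fun y hy => hmono.injective (hy.trans hlam₀.symm)⟩,
    hval, hpos0, hneg⟩
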